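/- For NIM with subtraction set A = {1, L, L+1} where L is odd and L ≥ 3, the second player wins the game with n stones if and only if n mod (2L+1) is an even number in {0, 2, 4, ..., L-1}. -/
import Mathlib

private lemma aux_sub_mod (m a n : ℕ) (hm : 0 < m) (ha : a < m) (han : a ≤ n) :
    (n - a) % m = if a ≤ n % m then n % m - a else n % m + m - a := by
  obtain ⟨q, r, rfl, hr⟩ : ∃ q r, n = m * q + r ∧ r < m :=
    ⟨n / m, n % m, (Nat.div_add_mod n m).symm, Nat.mod_lt _ hm⟩
  rw [Nat.mul_add_mod, Nat.mod_eq_of_lt hr]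
  split_ifs with h
  · have e : m * q + r - a = m * q + (r - a) := by omega
    rw [e, Nat.mul_add_mod, Nat.mod_eq_of_lt (by omega)]
  · have hq : 1 ≤ q := by
      rcases Nat.eq_zero_or_pos q with h0 | h0
      · subst h0; simp at han; omega
      · exact h0
    obtain ⟨k, rfl⟩ := Nat.exists_eq_add_of_le hq
    have e : m * (1 + k) + r - a = m * k + (r + m - a) := by
      have : m * (1 + k) = m + m * k := by ring
      omega
    rw [e, Nat.mul_add_mod, Nat.mod_eq_of_lt (by omega)]

/-- NIM({1,L,L+1};n), L odd ≥ 3: second player wins iff n mod (2L+1) is an even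
number in {0,2,...,L-1}. -/
theorem nim_one_L_Lsucc_odd (L : ℕ) (hL : Odd L) (hL3 : 3 ≤ L)
    (P : ℕ → Prop)
    (hP : ∀ n, P n ↔ ∀ a ∈ ({1, L, L + 1} : Finset ℕ), a ≤ n → ¬ P (n - a)) :
    ∀ n, P n ↔ (Even (n % (2 * L + 1)) ∧ n % (2 * L + 1) ≤ L - 1) := by
  have hm : 0 < 2 * L + 1 := by omega
  have hL2 : L % 2 = 1 := Nat.odd_iff.mp hL
  intro n
  induction n using Nat.strong_induction_on with
  | _ n ih =>
    have hrlt : n % (2 * L + 1) < 2 * L + 1 := Nat.mod_lt _ hm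
    have hrle : n % (2 * L + 1) ≤ n := Nat.mod_le _ _
    have key : (Even (n % (2 * L + 1)) ∧ n % (2 * L + 1) ≤ L - 1) ↔
        ((1 ≤ n → ¬ (Even ((n - 1) % (2 * L + 1)) ∧ (n - 1) % (2 * L + 1) ≤ L - 1)) ∧
         (L ≤ n → ¬ (Even ((n - L) % (2 * L + 1)) ∧ (n - L) % (2 * L + 1) ≤ L - 1)) ∧
         (L + 1 ≤ n → ¬ (Even ((n - (L + 1)) % (2 * L + 1)) ∧
            (n - (L + 1)) % (2 * L + 1) ≤ L - 1))) := by
      simp only [Nat.even_iff]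
      constructor
      · rintro ⟨he, hle⟩
        refine ⟨fun h => ?_, fun h => ?_, fun h => ?_⟩ <;>
        · rw [aux_sub_mod _ _ _ hm (by omega) h]
          split_ifs <;> omega
      · rintro ⟨h1, h2, h3⟩
        by_contra hc
        have E1 : 1 ≤ n % (2 * L + 1) →
            ¬ ((n % (2 * L + 1) - 1) % 2 = 0 ∧ n % (2 * L + 1) - 1 ≤ L - 1) := by
          intro hr1
          have := h1 (by omega)
          rwa [aux_sub_mod _ _ _ hm (by omega) (by omega), if_pos hr1] at this
        have EL : L ≤ n % (2 * L + 1) →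
            ¬ ((n % (2 * L + 1) - L) % 2 = 0 ∧ n % (2 * L + 1) - L ≤ L - 1) := by
          intro hr1
          have := h2 (by omega)
          rwa [aux_sub_mod _ _ _ hm (by omega) (by omega), if_pos hr1] at this
        have EL1 : L + 1 ≤ n % (2 * L + 1) →
            ¬ ((n % (2 * L + 1) - (L + 1)) % 2 = 0 ∧
               n % (2 * L + 1) - (L + 1) ≤ L - 1) := by
          intro hr1
          have := h3 (by omega)
          rwa [aux_sub_mod _ _ _ hm (by omega) (by omega), if_pos hr1] at this
        omega
    rw [hP n]
    simp only [Finset.mem_insert, Finset.mem_singleton, forall_eq_or_imp, forall_eq]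
    refine Iff.trans (and_congr (imp_congr_right fun h => not_congr (ih _ (by omega)))
      (and_congr (imp_congr_right fun h => not_congr (ih _ (by omega)))
        (imp_congr_right fun h => not_congr (ih _ (by omega))))) key.symm
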